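/- Let V be a free ℤ-module of finite rank n+1 with a bilinear form ⟨·,·⟩ (not necessarily symmetric), and let ε = (e₀,…,e_n) be an exceptional basis of V. Then, as equalities of (n+1)-tuples of elements of V: (1) L_i(R_i ε) = R_i(L_i ε) = ε for all 1 ≤ i ≤ n; (2) L_i(L_j ε) = L_j(L_i ε) whenever |i − j| > 1; (3) L_i(L_{i+1}(L_i ε)) = L_{i+1}(L_i(L_{i+1} ε)) for all 1 ≤ i ≤ n−1. In particular the left mutations satisfy the braid relations on the set of exceptional bases, so the braid group on n+1 strands acts by mutations on exceptional bases of V. -/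

import Mathlib

/-- Left mutation of the tuple `e` at the neighbouring pair of positions `(j, j+1)`
(in the paper's notation, `L_i` with `i = j + 1` replaces `(e_{i-1}, e_i)` by
`(e_i - ⟨e_{i-1}, e_i⟩ e_{i-1}, e_{i-1})`). -/
def leftMut {V : Type*} [AddCommGroup V] [Module ℤ V] (B : V →ₗ[ℤ] V →ₗ[ℤ] ℤ)
    {n : ℕ} (e : Fin (n + 1) → V) (j : Fin n) : Fin (n + 1) → V :=
  fun k =>
    if k = j.castSucc then e j.succ - B (e j.castSucc) (e j.succ) • e j.castSucc
    else if k = j.succ then e j.castSucc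
    else e k

/-- Right mutation of the tuple `e` at the neighbouring pair of positions `(j, j+1)`
(in the paper's notation, `R_i` with `i = j + 1` replaces `(e_{i-1}, e_i)` by
`(e_i, e_{i-1} - ⟨e_{i-1}, e_i⟩ e_i)`). -/
def rightMut {V : Type*} [AddCommGroup V] [Module ℤ V] (B : V →ₗ[ℤ] V →ₗ[ℤ] ℤ)
    {n : ℕ} (e : Fin (n + 1) → V) (j : Fin n) : Fin (n + 1) → V :=
  fun k =>
    if k = j.castSucc then e j.succ
    else if k = j.succ then e j.castSucc - B (e j.castSucc) (e j.succ) • e j.succ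
    else e k

section helpers

variable {V : Type*} [AddCommGroup V] [Module ℤ V] (B : V →ₗ[ℤ] V →ₗ[ℤ] ℤ)
  {n : ℕ} (e : Fin (n + 1) → V) (j : Fin n)

theorem lm_cast : leftMut B e j j.castSucc
    = e j.succ - B (e j.castSucc) (e j.succ) • e j.castSucc := by
  simp [leftMut]

theorem lm_succ : leftMut B e j j.succ = e j.castSucc := by
  simp [leftMut, (Fin.castSucc_lt_succ : j.castSucc < j.succ).ne']

theorem lm_other {k : Fin (n + 1)} (hk1 : k ≠ j.castSucc) (hk2 : k ≠ j.succ) :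
    leftMut B e j k = e k := by
  simp [leftMut, hk1, hk2]

theorem rm_cast : rightMut B e j j.castSucc = e j.succ := by
  simp [rightMut]

theorem rm_succ : rightMut B e j j.succ
    = e j.castSucc - B (e j.castSucc) (e j.succ) • e j.succ := by
  simp [rightMut, (Fin.castSucc_lt_succ : j.castSucc < j.succ).ne']

theorem rm_other {k : Fin (n + 1)} (hk1 : k ≠ j.castSucc) (hk2 : k ≠ j.succ) :
    rightMut B e j k = e k := by
  simp [rightMut, hk1, hk2]

theorem keyA (x y : V) (hyx : B y x = 0) (hyy : B y y = 1) :
    (x - B x y • y) - B y (x - B x y • y) • y = x := by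
  have h : B y (x - B x y • y) = -(B x y) := by simp [hyx, hyy]
  rw [h, neg_zsmul]
  abel

theorem keyB (x y : V) (hyx : B y x = 0) (hxx : B x x = 1) :
    (y - B x y • x) - B (y - B x y • x) x • x = y := by
  have h : B (y - B x y • x) x = -(B x y) := by simp [hyx, hxx]
  rw [h, neg_zsmul]
  abel

theorem keyC (a b c : V) (haa : B a a = 1) (hba : B b a = 0) :
    (c - B a c • a) - B (b - B a b • a) (c - B a c • a) • (b - B a b • a)
      = (c - B b c • b - B a (c - B b c • b) • a) := by
  have key : B (b - B a b • a) (c - B a c • a) = B b c := by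
    simp only [map_sub, map_zsmul, LinearMap.sub_apply, LinearMap.smul_apply,
      zsmul_eq_mul, Int.cast_id, haa, hba]
    ring
  have key2 : B a (c - B b c • b) = B a c - B b c * B a b := by
    simp only [map_sub, map_zsmul, zsmul_eq_mul, Int.cast_id]
  rw [key, key2, zsmul_sub, sub_zsmul, mul_zsmul]
  abel

/-- Distant left mutations commute. -/
theorem lm_comm {i j : Fin n}
    (hcc : i.castSucc ≠ j.castSucc) (hcs : i.castSucc ≠ j.succ)
    (hsc : i.succ ≠ j.castSucc) (hss : i.succ ≠ j.succ) :
    leftMut B (leftMut B e j) i = leftMut B (leftMut B e i) j := by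
  funext k
  by_cases hk1 : k = i.castSucc
  · subst hk1
    rw [lm_cast B (leftMut B e j) i, lm_other B e j hsc hss,
        lm_other B e j hcc hcs, lm_other B (leftMut B e i) j hcc hcs,
        lm_cast B e i]
  · by_cases hk2 : k = i.succ
    · subst hk2
      rw [lm_succ B (leftMut B e j) i, lm_other B e j hcc hcs,
          lm_other B (leftMut B e i) j hsc hss, lm_succ B e i]
    · by_cases hk3 : k = j.castSucc
      · subst hk3
        rw [lm_other B (leftMut B e j) i (Ne.symm hcc) (Ne.symm hsc),
            lm_cast B e j, lm_cast B (leftMut B e i) j,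
            lm_other B e i (Ne.symm hcc) (Ne.symm hsc),
            lm_other B e i (Ne.symm hcs) (Ne.symm hss)]
      · by_cases hk4 : k = j.succ
        · subst hk4
          rw [lm_other B (leftMut B e j) i (Ne.symm hcs) (Ne.symm hss),
              lm_succ B e j, lm_succ B (leftMut B e i) j,
              lm_other B e i (Ne.symm hcc) (Ne.symm hsc)]
        · rw [lm_other B (leftMut B e j) i hk1 hk2, lm_other B e j hk3 hk4,
              lm_other B (leftMut B e i) j hk3 hk4, lm_other B e i hk1 hk2]

end helpers

/-- Mutations of an exceptional basis of a Mukai lattice satisfy: left and right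
mutations at the same position are mutually inverse, distant left mutations commute,
and consecutive left mutations satisfy the braid relation; hence the braid group
acts by mutations on exceptional bases. -/
theorem stmt_9 {V : Type*} [AddCommGroup V] [Module ℤ V] {n : ℕ}
    (B : V →ₗ[ℤ] V →ₗ[ℤ] ℤ)
    (e : Module.Basis (Fin (n + 1)) ℤ V)
    (h1 : ∀ i, B (e i) (e i) = 1)
    (h2 : ∀ i j : Fin (n + 1), i < j → B (e j) (e i) = 0) :
    (∀ i : Fin n,
      leftMut B (rightMut B (⇑e) i) i = ⇑e ∧ rightMut B (leftMut B (⇑e) i) i = ⇑e) ∧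
    (∀ i j : Fin n, ((i : ℕ) + 1 < (j : ℕ) ∨ (j : ℕ) + 1 < (i : ℕ)) →
      leftMut B (leftMut B (⇑e) j) i = leftMut B (leftMut B (⇑e) i) j) ∧
    (∀ i j : Fin n, (j : ℕ) = (i : ℕ) + 1 →
      leftMut B (leftMut B (leftMut B (⇑e) i) j) i =
        leftMut B (leftMut B (leftMut B (⇑e) j) i) j) := by
  refine ⟨?_, ?_, ?_⟩
  · -- left and right mutations are mutually inverse
    intro i
    have hab : B (e i.succ) (e i.castSucc) = 0 := h2 _ _ (Fin.castSucc_lt_succ : i.castSucc < i.succ)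
    constructor
    · funext k
      by_cases hk1 : k = i.castSucc
      · subst hk1
        rw [lm_cast, rm_cast, rm_succ]
        exact keyA B _ _ hab (h1 _)
      · by_cases hk2 : k = i.succ
        · subst hk2
          rw [lm_succ, rm_cast]
        · rw [lm_other B _ i hk1 hk2, rm_other B _ i hk1 hk2]
    · funext k
      by_cases hk1 : k = i.castSucc
      · subst hk1
        rw [rm_cast, lm_succ]
      · by_cases hk2 : k = i.succ
        · subst hk2
          rw [rm_succ, lm_cast, lm_succ]
          exact keyB B _ _ hab (h1 _)
        · rw [rm_other B _ i hk1 hk2, lm_other B _ i hk1 hk2]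
  · -- distant left mutations commute
    intro i j hij
    apply lm_comm <;>
      (simp only [ne_eq, Fin.ext_iff, Fin.coe_castSucc, Fin.val_succ]; omega)
  · -- braid relation
    intro i j hij
    have hji : j.castSucc = i.succ := by
      apply Fin.ext; simp [hij]
    have hab : B (e i.succ) (e i.castSucc) = 0 := h2 _ _ (Fin.castSucc_lt_succ : i.castSucc < i.succ)
    have hcjs : (i.castSucc : Fin (n + 1)) ≠ j.succ := by
      simp only [ne_eq, Fin.ext_iff, Fin.coe_castSucc, Fin.val_succ]; omega
    have hsjs : (i.succ : Fin (n + 1)) ≠ j.succ := by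
      simp only [ne_eq, Fin.ext_iff, Fin.val_succ]; omega
    have hcs : (i.castSucc : Fin (n + 1)) ≠ i.succ := (Fin.castSucc_lt_succ : i.castSucc < i.succ).ne
    -- abbreviations
    set P := leftMut B (⇑e) i with hP
    set Q := leftMut B (⇑e) j with hQ
    set X := leftMut B P j with hX
    set Y := leftMut B Q i with hY
    -- pointwise values of P and Q
    have hP_cast : P i.castSucc
        = e i.succ - B (e i.castSucc) (e i.succ) • e i.castSucc := lm_cast B (⇑e) i
    have hP_succ : P i.succ = e i.castSucc := lm_succ B (⇑e) i
    have hP_js : P j.succ = e j.succ :=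
      lm_other B (⇑e) i (Ne.symm hcjs) (Ne.symm hsjs)
    have hQ_isucc : Q i.succ
        = e j.succ - B (e i.succ) (e j.succ) • e i.succ := by
      have h := lm_cast B (⇑e) j
      rwa [hji] at h
    have hQ_jsucc : Q j.succ = e i.succ := by
      have h := lm_succ B (⇑e) j
      rwa [hji] at h
    have hQ_cast : Q i.castSucc = e i.castSucc := by
      apply lm_other B (⇑e) j _ hcjs
      rw [hji]; exact hcs
    -- pointwise values of X and Y
    have hX_cast : X i.castSucc
        = e i.succ - B (e i.castSucc) (e i.succ) • e i.castSucc := by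
      rw [hX]
      rw [lm_other B P j _ hcjs]
      · exact hP_cast
      · rw [hji]; exact hcs
    have hX_isucc : X i.succ
        = e j.succ - B (e i.castSucc) (e j.succ) • e i.castSucc := by
      rw [hX, ← hji]
      rw [lm_cast, hji, hP_js, hP_succ]
    have hX_jsucc : X j.succ = e i.castSucc := by
      rw [hX, lm_succ, hji, hP_succ]
    have hY_cast : Y i.castSucc
        = (e j.succ - B (e i.succ) (e j.succ) • e i.succ)
          - B (e i.castSucc) (e j.succ - B (e i.succ) (e j.succ) • e i.succ)
            • e i.castSucc := by
      rw [hY, lm_cast, hQ_isucc, hQ_cast]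
    have hY_isucc : Y i.succ = e i.castSucc := by
      rw [hY, lm_succ, hQ_cast]
    have hY_jsucc : Y j.succ = e i.succ := by
      rw [hY, lm_other B Q i (Ne.symm hcjs) (Ne.symm hsjs), hQ_jsucc]
    funext k
    by_cases hk1 : k = i.castSucc
    · subst hk1
      rw [lm_cast, hX_isucc, hX_cast,
          lm_other B Y j _ hcjs, hY_cast]
      · exact keyC B (e i.castSucc) (e i.succ) (e j.succ) (h1 _) hab
      · rw [hji]; exact hcs
    · by_cases hk2 : k = i.succ
      · subst hk2
        rw [lm_succ, hX_cast]
        have h := lm_cast B Y j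
        rw [hji] at h
        rw [h, hY_jsucc, hY_isucc]
      · by_cases hk3 : k = j.succ
        · subst hk3
          rw [lm_other B X i _ _, hX_jsucc, lm_succ, hji, hY_isucc]
          · exact Ne.symm hcjs
          · exact Ne.symm hsjs
        · rw [lm_other B X i hk1 hk2, hX, lm_other B P j _ hk3,
              hP, lm_other B (⇑e) i hk1 hk2,
              lm_other B Y j _ hk3, hY, lm_other B Q i hk1 hk2,
              hQ, lm_other B (⇑e) j _ hk3]
          · rw [hji]; exact hk2
          · rw [hji]; exact hk2
          · rw [hji]; exact hk2
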